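/- Let f be a good càdlàg function on [0,T] without negative jumps, and let (l₁,r₁) and (l₂,r₂) be two excursion intervals of f with l₁ < l₂. Then r₁ < l₂; that is, excursion intervals of a good function are not nested and are pairwise disjoint and ordered. -/

import Mathlib

open Set Function

/-- `f` has left limits at every point. -/
def HasLeftLimits (f : ℝ → ℝ) : Prop :=
  ∀ x : ℝ, ∃ l : ℝ, Filter.Tendsto f (nhdsWithin x (Iio x)) (nhds l)

/-- `f` is right-continuous. -/
def RightCont (f : ℝ → ℝ) : Prop :=
  ∀ x : ℝ, ContinuousWithinAt f (Ici x) x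

/-- `f` has no negative jumps. -/
def NoNegJumps (f : ℝ → ℝ) : Prop :=
  ∀ x : ℝ, Function.leftLim f x ≤ f x

/-- `(l, r)` is an excursion interval of `f`:
`f(l-) = f(r-) = inf_{t ≤ r} f(t)` and `f(t) > inf_{s ≤ l} f(s)` on `(l, r)`. -/
def IsExcursionInterval (f : ℝ → ℝ) (l r : ℝ) : Prop :=
  0 ≤ l ∧ l < r ∧
  Function.leftLim f l = sInf (f '' Icc 0 r) ∧
  Function.leftLim f r = sInf (f '' Icc 0 r) ∧
  ∀ t ∈ Ioo l r, sInf (f '' Icc 0 l) < f t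

/-- The right endpoints of excursion intervals of `f` contained in `[0, T]`. -/
def ExcEnds (f : ℝ → ℝ) (T : ℝ) : Set ℝ :=
  {r | ∃ l, IsExcursionInterval f l r ∧ r ≤ T}

/-- `f` is good on `[0, T]`: the excursion right-endpoints have no isolated points,
the complement of the union of excursion intervals in `[0, sup of endpoints]` is
Lebesgue-null, and `f` attains no local minimum at any excursion right-endpoint. -/
def GoodOn (f : ℝ → ℝ) (T : ℝ) : Prop :=
  (∀ r ∈ ExcEnds f T, r ∈ closure (ExcEnds f T \ {r})) ∧
  MeasureTheory.volume
      (Icc (0 : ℝ) (sSup (ExcEnds f T)) \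
        ⋃ p ∈ {p : ℝ × ℝ | IsExcursionInterval f p.1 p.2 ∧ p.2 ≤ T}, Ioo p.1 p.2) = 0 ∧
  ∀ r ∈ ExcEnds f T, ¬ IsLocalMin f r

section Aux
variable {f : ℝ → ℝ} {T : ℝ}

lemma tendsto_leftLim' (hll : HasLeftLimits f) (x : ℝ) :
    Filter.Tendsto f (nhdsWithin x (Iio x)) (nhds (Function.leftLim f x)) := by
  obtain ⟨L, hL⟩ := hll x
  have hne : (nhdsWithin x (Iio x)) ≠ ⊥ := Filter.NeBot.ne inferInstance
  rw [leftLim_eq_of_tendsto hL]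
  exact hL

lemma bddBelow_image_Icc (hrc : RightCont f) (hll : HasLeftLimits f) (a b : ℝ) :
    BddBelow (f '' Icc a b) := by
  have key : ∀ x : ℝ, ∃ c : ℝ, ∀ᶠ y in nhds x, c < f y := by
    intro x
    obtain ⟨L, hL⟩ := hll x
    refine ⟨min (L - 1) (f x - 1), ?_⟩
    rw [← nhdsLT_sup_nhdsGE x, Filter.eventually_sup]
    constructor
    · exact hL.eventually (eventually_gt_nhds (lt_of_le_of_lt (min_le_left _ _) (by linarith)))
    · exact (hrc x).eventually (eventually_gt_nhds (lt_of_le_of_lt (min_le_right _ _) (by linarith)))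
  choose c hc using key
  obtain ⟨t, -, ht⟩ := isCompact_Icc.elim_nhds_subcover (fun x => {y | c x < f y}) (fun x _ => hc x)
  rcases t.eq_empty_or_nonempty with rfl | hne
  · have h0 : Icc a b = ∅ := by simpa using ht
    rw [h0, image_empty]
    exact bddBelow_empty
  · refine ⟨t.inf' hne c, ?_⟩
    rintro y ⟨z, hz, rfl⟩
    obtain ⟨i, hi, hiz⟩ : ∃ i ∈ t, c i < f z := by simpa using ht hz
    exact le_trans (Finset.inf'_le c hi) (le_of_lt hiz)

lemma sInf_mono' (hrc : RightCont f) (hll : HasLeftLimits f) {a b : ℝ}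
    (h0 : 0 ≤ a) (hab : a ≤ b) :
    sInf (f '' Icc 0 b) ≤ sInf (f '' Icc 0 a) :=
  csInf_le_csInf (bddBelow_image_Icc hrc hll 0 b)
    ⟨f a, a, ⟨h0, le_rfl⟩, rfl⟩
    (image_mono (f := f) (Icc_subset_Icc le_rfl hab))

lemma sInf_le_apply (hrc : RightCont f) (hll : HasLeftLimits f) {b x : ℝ}
    (hx : x ∈ Icc (0:ℝ) b) : sInf (f '' Icc 0 b) ≤ f x :=
  csInf_le (bddBelow_image_Icc hrc hll 0 b) ⟨x, hx, rfl⟩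

lemma exc_sInf_eq (hrc : RightCont f) (hll : HasLeftLimits f) {l r : ℝ}
    (h : IsExcursionInterval f l r) :
    sInf (f '' Icc 0 l) = sInf (f '' Icc 0 r) := by
  obtain ⟨h0, hlr, hLl, hLr, hcond⟩ := h
  rcases eq_or_lt_of_le h0 with h0' | hpos
  · -- l = 0
    have h00 : sInf (f '' Icc (0:ℝ) 0) = f 0 := by
      rw [Icc_self, image_singleton, csInf_singleton]
    subst h0'
    rw [h00]
    refine le_antisymm ?_ (sInf_le_apply hrc hll ⟨le_rfl, le_of_lt hlr⟩)
    have ht := tendsto_leftLim' hll r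
    have hev : ∀ᶠ t in nhdsWithin r (Iio r), f 0 ≤ f t := by
      filter_upwards [Ioo_mem_nhdsLT_of_mem (show r ∈ Ioc (0:ℝ) r from ⟨hlr, le_rfl⟩)] with t ht'
      have h2 := hcond t ht'
      rw [h00] at h2
      exact le_of_lt h2
    have h3 := ge_of_tendsto ht hev
    rwa [hLr] at h3
  · have h1 : sInf (f '' Icc 0 r) ≤ sInf (f '' Icc 0 l) := sInf_mono' hrc hll h0 (le_of_lt hlr)
    refine le_antisymm ?_ h1
    have ht := tendsto_leftLim' hll l
    have hev : ∀ᶠ t in nhdsWithin l (Iio l), sInf (f '' Icc 0 l) ≤ f t := by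
      filter_upwards [Ioo_mem_nhdsLT_of_mem (show l ∈ Ioc (0:ℝ) l from ⟨hpos, le_rfl⟩)] with t ht'
      exact sInf_le_apply hrc hll ⟨le_of_lt ht'.1, le_of_lt ht'.2⟩
    have h3 := ge_of_tendsto ht hev
    rwa [hLl] at h3

lemma no_inner_endpoint (hrc : RightCont f) (hll : HasLeftLimits f)
    (hgood : GoodOn f T) {l r ρ : ℝ} (hexc : IsExcursionInterval f l r)
    (hρE : ρ ∈ ExcEnds f T) (hρm : ρ ∈ Ioo l r) : False := by
  have hlM : sInf (f '' Icc 0 l) = sInf (f '' Icc 0 r) := exc_sInf_eq hrc hll hexc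
  set M := sInf (f '' Icc 0 r) with hMdef
  -- key1 : left limits of inner endpoints equal M
  have key1 : ∀ τ, τ ∈ ExcEnds f T → τ ∈ Ioo l r → Function.leftLim f τ = M := by
    rintro τ ⟨aτ, hb, hτT⟩ hm
    have e := hb.2.2.2.1
    have le1 : sInf (f '' Icc 0 τ) ≤ M := by
      rw [← hlM]
      exact sInf_mono' hrc hll hexc.1 (le_of_lt hm.1)
    have le2 : M ≤ sInf (f '' Icc 0 τ) :=
      sInf_mono' hrc hll (le_trans hexc.1 (le_of_lt hm.1)) (le_of_lt hm.2)
    exact e.trans (le_antisymm le1 le2)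
  -- key2 : no endpoints just to the right of any point of Ioo l r
  have key2 : ∀ σ ∈ Ioo l r, ∃ u, σ < u ∧
      ∀ τ, τ ∈ ExcEnds f T → τ ∈ Ioo l r → τ ∉ Ioo σ u := by
    intro σ hσ
    have hfσ : M < f σ := by
      have := hexc.2.2.2.2 σ hσ
      rwa [hlM] at this
    set cc := (M + f σ) / 2 with hccdef
    have hcM : M < cc := by rw [hccdef]; linarith
    have hcf : cc < f σ := by rw [hccdef]; linarith
    have hev : ∀ᶠ y in nhdsWithin σ (Ici σ), cc < f y :=
      (hrc σ).eventually (eventually_gt_nhds hcf)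
    obtain ⟨u, hu, hsub⟩ := mem_nhdsGE_iff_exists_Ico_subset.mp hev
    refine ⟨u, hu, ?_⟩
    rintro τ hτE hτm ⟨hτ1, hτ2⟩
    have hLτ : Function.leftLim f τ = M := key1 τ hτE hτm
    have ht := tendsto_leftLim' hll τ
    rw [hLτ] at ht
    have hev2 : ∀ᶠ t in nhdsWithin τ (Iio τ), cc ≤ f t := by
      filter_upwards [Ioo_mem_nhdsLT_of_mem (show τ ∈ Ioc σ τ from ⟨hτ1, le_rfl⟩)] with t ht'
      exact le_of_lt (hsub ⟨le_of_lt ht'.1, lt_trans ht'.2 hτ2⟩)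
    exact absurd (ge_of_tendsto ht hev2) (not_le.mpr hcM)
  -- key3 : endpoints in Ioo l r accumulate from the left
  have key3 : ∀ τ, τ ∈ ExcEnds f T → τ ∈ Ioo l r → ∀ η > 0,
      ∃ τ', τ' ∈ ExcEnds f T ∧ τ' ∈ Ioo l r ∧ τ' ∈ Ioo (τ - η) τ := by
    intro τ hτE hτm η hη
    obtain ⟨u, hu, hno⟩ := key2 τ hτm
    set δ := min (min η (u - τ)) (min (r - τ) (τ - l)) with hδdef
    have hδ : 0 < δ := by
      apply lt_min (lt_min hη (by linarith)) (lt_min (by linarith [hτm.2]) (by linarith [hτm.1]))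
    obtain ⟨τ', hτ'mem, hdist⟩ := Metric.mem_closure_iff.mp (hgood.1 τ hτE) δ hδ
    obtain ⟨hτ'E, hτ'ne⟩ := hτ'mem
    rw [Real.dist_eq] at hdist
    have habs := abs_lt.mp hdist
    have hδη : δ ≤ η := le_trans (min_le_left _ _) (min_le_left _ _)
    have hδu : δ ≤ u - τ := le_trans (min_le_left _ _) (min_le_right _ _)
    have hδr : δ ≤ r - τ := le_trans (min_le_right _ _) (min_le_left _ _)
    have hδl : δ ≤ τ - l := le_trans (min_le_right _ _) (min_le_right _ _)
    have hne' : τ' ≠ τ := by simpa using hτ'ne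
    rcases lt_or_gt_of_ne hne' with hlt | hgt
    · refine ⟨τ', hτ'E, ⟨by linarith [habs.1], lt_trans hlt hτm.2⟩, ⟨by linarith [habs.1], hlt⟩⟩
    · exfalso
      exact hno τ' hτ'E ⟨lt_trans hτm.1 hgt, by linarith [habs.2]⟩ ⟨hgt, by linarith [habs.2]⟩
  -- final descent
  set x := (l + ρ) / 2 with hxdef
  have hx1 : l < x := by rw [hxdef]; linarith [hρm.1]
  have hx2 : x < ρ := by rw [hxdef]; linarith [hρm.1]
  set A := {τ : ℝ | (τ ∈ ExcEnds f T ∧ τ ∈ Ioo l r) ∧ x < τ} with hAdef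
  have hA : A.Nonempty := ⟨ρ, ⟨hρE, hρm⟩, hx2⟩
  have hbdd : BddBelow A := ⟨x, fun τ hτ => le_of_lt hτ.2⟩
  set σ := sInf A with hσdef
  have hσx : x ≤ σ := le_csInf hA (fun τ hτ => le_of_lt hτ.2)
  have hσρ : σ ≤ ρ := csInf_le hbdd ⟨⟨hρE, hρm⟩, hx2⟩
  have hσmem : σ ∈ Ioo l r := ⟨lt_of_lt_of_le hx1 hσx, lt_of_le_of_lt hσρ hρm.2⟩
  obtain ⟨u, hu, hno⟩ := key2 σ hσmem
  obtain ⟨a, ha, halt⟩ := exists_lt_of_csInf_lt hA hu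
  have hge : σ ≤ a := csInf_le hbdd ha
  rcases hge.eq_or_lt with heq | hgt
  · -- σ ∈ A
    have hσA : σ ∈ A := heq ▸ ha
    obtain ⟨τ', hτ'E, hτ'm, hτ'io⟩ := key3 σ hσA.1.1 hσA.1.2 (σ - x) (by linarith [hσA.2])
    have : σ ≤ τ' := csInf_le hbdd ⟨⟨hτ'E, hτ'm⟩, by linarith [hτ'io.1]⟩
    linarith [hτ'io.2]
  · exact hno a ha.1.1 ha.1.2 ⟨hgt, halt⟩

end Aux

/-- Excursion intervals of a good càdlàg function without negative jumps are not
nested: if `(l₁, r₁)` and `(l₂, r₂)` are excursion intervals (with endpoints in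
`[0,T]`) and `l₁ < l₂`, then `r₁ < l₂`. -/
theorem good_excursions_ordered (f : ℝ → ℝ) (T : ℝ)
    (hrc : RightCont f) (hll : HasLeftLimits f) (hnn : NoNegJumps f)
    (hgood : GoodOn f T)
    (l₁ r₁ l₂ r₂ : ℝ)
    (h₁ : IsExcursionInterval f l₁ r₁) (hr₁ : r₁ ≤ T)
    (h₂ : IsExcursionInterval f l₂ r₂) (hr₂ : r₂ ≤ T)
    (hl : l₁ < l₂) :
    r₁ < l₂ := by
  by_contra hcon
  push_neg at hcon
  have hM1 := exc_sInf_eq hrc hll h₁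
  have hM2 := exc_sInf_eq hrc hll h₂
  rcases lt_or_eq_of_le hcon with hlt | heq
  · -- l₂ < r₁ : (l₁, l₂) is an excursion interval, so l₂ is an inner endpoint of (l₁, r₁)
    have hM21 : sInf (f '' Icc 0 r₂) ≤ sInf (f '' Icc 0 r₁) := by
      calc sInf (f '' Icc 0 r₂) = sInf (f '' Icc 0 l₂) := hM2.symm
        _ ≤ sInf (f '' Icc 0 l₁) := sInf_mono' hrc hll h₁.1 (le_of_lt hl)
        _ = sInf (f '' Icc 0 r₁) := hM1
    have hM12 : sInf (f '' Icc 0 r₁) ≤ sInf (f '' Icc 0 r₂) := by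
      have ht := tendsto_leftLim' hll l₂
      have hev : ∀ᶠ t in nhdsWithin l₂ (Iio l₂), sInf (f '' Icc 0 r₁) ≤ f t := by
        filter_upwards [Ioo_mem_nhdsLT_of_mem (show l₂ ∈ Ioc l₁ l₂ from ⟨hl, le_rfl⟩)] with t ht'
        have h3 := h₁.2.2.2.2 t ⟨ht'.1, lt_trans ht'.2 hlt⟩
        rw [hM1] at h3
        exact le_of_lt h3
      have h3 := ge_of_tendsto ht hev
      rwa [h₂.2.2.1] at h3
    have hMeq : sInf (f '' Icc 0 r₁) = sInf (f '' Icc 0 r₂) := le_antisymm hM12 hM21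
    have hnew : IsExcursionInterval f l₁ l₂ := by
      refine ⟨h₁.1, hl, ?_, ?_, ?_⟩
      · rw [h₁.2.2.1, hMeq]; exact hM2.symm
      · rw [h₂.2.2.1]; exact hM2.symm
      · intro t ht'
        exact h₁.2.2.2.2 t ⟨ht'.1, lt_trans ht'.2 hlt⟩
    exact no_inner_endpoint hrc hll hgood h₁
      ⟨l₁, hnew, le_trans (le_of_lt hlt) hr₁⟩ ⟨hl, hlt⟩
  · -- l₂ = r₁
    subst heq
    have hMeq : sInf (f '' Icc 0 l₂) = sInf (f '' Icc 0 r₂) :=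
      (h₁.2.2.2.1).symm.trans (h₂.2.2.1)
    have hfr : sInf (f '' Icc 0 l₂) ≤ f l₂ := by
      have h3 := hnn l₂
      rwa [h₁.2.2.2.1] at h3
    rcases hfr.eq_or_lt with heqf | hltf
    · -- f l₂ = M : l₂ is a local min, contradiction
      have hmin : IsLocalMin f l₂ := by
        have hnb : Ioo l₁ r₂ ∈ nhds l₂ := isOpen_Ioo.mem_nhds ⟨h₁.2.1, h₂.2.1⟩
        refine Filter.eventually_of_mem hnb ?_
        intro s hs
        rcases lt_trichotomy s l₂ with h | h | h
        · have h3 := h₁.2.2.2.2 s ⟨hs.1, h⟩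
          rw [hM1] at h3
          exact le_of_lt (heqf ▸ h3)
        · rw [h]
        · have h3 := h₂.2.2.2.2 s ⟨h, hs.2⟩
          exact le_of_lt (heqf ▸ h3)
      exact hgood.2.2 l₂ ⟨l₁, h₁, hr₁⟩ hmin
    · -- f l₂ > M : (l₁, r₂) is an excursion with l₂ an inner endpoint
      have hnew : IsExcursionInterval f l₁ r₂ := by
        refine ⟨h₁.1, lt_trans h₁.2.1 h₂.2.1, ?_, h₂.2.2.2.1, ?_⟩
        · rw [h₁.2.2.1, hMeq]
        · intro t ht'
          rcases lt_trichotomy t l₂ with h | h | h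
          · exact h₁.2.2.2.2 t ⟨ht'.1, h⟩
          · rw [h, hM1]
            exact hltf
          · have h3 := h₂.2.2.2.2 t ⟨h, ht'.2⟩
            rw [hM1]
            exact h3
      exact no_inner_endpoint hrc hll hgood hnew
        ⟨l₁, h₁, hr₁⟩ ⟨h₁.2.1, h₂.2.1⟩
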